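/- Wang's theorem: if every Wang tile set that admits a tiling of the plane also admits a periodic tiling (Wang's Fundamental Conjecture), then the predicate 'S admits a tiling of the plane', on Wang tile sets encoded as finite lists of quadruples of natural numbers, is a computable (decidable) predicate. -/

import Mathlib

/-- A Wang tile: the colours of its (west, south, east, north) edges. -/
abbrev WangTile : Type := ℕ × ℕ × ℕ × ℕ

def WangTile.west (t : WangTile) : ℕ := t.1
def WangTile.south (t : WangTile) : ℕ := t.2.1
def WangTile.east (t : WangTile) : ℕ := t.2.2.1
def WangTile.north (t : WangTile) : ℕ := t.2.2.2

/-- The Wang matching conditions for a configuration of tiles on `ℤ × ℤ`. -/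
def WangMatch (f : ℤ × ℤ → WangTile) : Prop :=
  ∀ x y : ℤ,
    (f (x, y)).east = (f (x + 1, y)).west ∧ (f (x, y)).north = (f (x, y + 1)).south

/-- A tiling of the plane by the Wang tile set `S`. -/
def IsWangTiling (S : Finset WangTile) (f : ℤ × ℤ → WangTile) : Prop :=
  (∀ p, f p ∈ S) ∧ WangMatch f

/-- A configuration is periodic if it is invariant under some nonzero translation. -/
def WangPeriodic (f : ℤ × ℤ → WangTile) : Prop :=
  ∃ v : ℤ × ℤ, v ≠ 0 ∧ ∀ p, f (p + v) = f p

/-- A Wang tile set is aperiodic if it admits a tiling of the plane and every tiling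
of the plane by it is nonperiodic. -/
def WangAperiodic (S : Finset WangTile) : Prop :=
  (∃ f, IsWangTiling S f) ∧ ∀ f, IsWangTiling S f → ¬ WangPeriodic f

/-- A tiling of the plane by the Wang tile set encoded by the list `l`. -/
def IsWangTilingL (l : List WangTile) (f : ℤ × ℤ → WangTile) : Prop :=
  (∀ p, f p ∈ l) ∧ WangMatch f

namespace WangAux

open Primrec

theorem primrec_list_all {α β : Type} [Primcodable α] [Primcodable β]
    {f : α → List β} {p : α → β → Bool} (hf : Primrec f) (hp : Primrec₂ p) :
    Primrec fun a => (f a).all (p a) := by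
  have : Primrec fun a => (f a).foldr (fun b s => p a b && s) true :=
    Primrec.list_foldr hf (const true)
      ((Primrec.dom_bool₂ (· && ·)).comp (hp.comp fst (fst.comp snd)) (snd.comp snd)).to₂
  refine this.of_eq fun a => ?_
  induction f a with
  | nil => rfl
  | cons b t ih => simp [List.all_cons, ih]

theorem primrec_list_any {α β : Type} [Primcodable α] [Primcodable β]
    {f : α → List β} {p : α → β → Bool} (hf : Primrec f) (hp : Primrec₂ p) :
    Primrec fun a => (f a).any (p a) := by
  have : Primrec fun a => (f a).foldr (fun b s => p a b || s) false :=
    Primrec.list_foldr hf (const false)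
      ((Primrec.dom_bool₂ (· || ·)).comp (hp.comp fst (fst.comp snd)) (snd.comp snd)).to₂
  refine this.of_eq fun a => ?_
  induction f a with
  | nil => rfl
  | cons b t ih => simp [List.any_cons, ih]

theorem re_exists {α : Type} [Primcodable α] {q : α → ℕ → Bool} (hq : Computable₂ q) :
    REPred fun a => ∃ n, q a n = true := by
  have h : Partrec fun a => Nat.rfind fun n => (q a n : Part Bool) :=
    Partrec.rfind (hq.partrec₂)
  refine h.dom_re.of_eq fun a => ?_
  refine (Nat.rfind_dom (p := fun n => (q a n : Part Bool))).trans ?_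
  simp

theorem hpow : Primrec₂ (· ^ · : ℕ → ℕ → ℕ) := Primrec₂.unpaired'.1 Nat.Primrec.pow


def T0 : WangTile := (0,0,0,0)

def dig (L m k : ℕ) : ℕ := m / L ^ k % L

def tileAt (l : List WangTile) (n m i j : ℕ) : WangTile :=
  l.getD (dig l.length m (i * n + j)) T0

def torusOK (l : List WangTile) (n m : ℕ) : Bool :=
  (List.range n).all fun i => (List.range n).all fun j =>
    ((tileAt l n m i j).east == (tileAt l n m ((i+1) % n) j).west) &&
    ((tileAt l n m i j).north == (tileAt l n m i ((j+1) % n)).south)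

def sqOK (l : List WangTile) (n m : ℕ) : Bool :=
  ((List.range (n-1)).all fun i => (List.range n).all fun j =>
    (tileAt l n m i j).east == (tileAt l n m (i+1) j).west) &&
  ((List.range n).all fun i => (List.range (n-1)).all fun j =>
    (tileAt l n m i j).north == (tileAt l n m i (j+1)).south)

def qA (l : List WangTile) (N : ℕ) : Bool :=
  (List.range (l.length ^ ((N+1) * (N+1)))).any fun m => torusOK l (N+1) m

def qB (l : List WangTile) (N : ℕ) : Bool :=
  (List.range (l.length ^ ((N+1) * (N+1)))).all fun m => !sqOK l (N+1) m

/-- encode a list of base-`L` digits as a number -/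
def enc (L : ℕ) : List ℕ → ℕ
  | [] => 0
  | d :: ds => d + L * enc L ds

theorem dig_enc (L : ℕ) : ∀ (ds : List ℕ), (∀ d ∈ ds, d < L) → ∀ k, dig L (enc L ds) k = ds.getD k 0
  | [], _, k => by simp [enc, dig]
  | d :: ds, h, 0 => by
    have hd : d < L := h d (by simp)
    simp [enc, dig, Nat.add_mul_mod_self_left, Nat.mod_eq_of_lt hd]
  | d :: ds, h, (k+1) => by
    have hd : d < L := h d (by simp)
    have hL : 0 < L := Nat.lt_of_le_of_lt (Nat.zero_le d) hd
    have hdiv : enc L (d :: ds) / L = enc L ds := by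
      simp only [enc]
      rw [Nat.add_mul_div_left _ _ hL, Nat.div_eq_of_lt hd, Nat.zero_add]
    have h2 := dig_enc L ds (fun d hd => h d (by simp [hd])) k
    simp only [dig, pow_succ, List.getD_cons_succ]
    rw [mul_comm, ← Nat.div_div_eq_div_mul, hdiv]
    exact h2

theorem enc_lt (L : ℕ) : ∀ (ds : List ℕ), (∀ d ∈ ds, d < L) → enc L ds < L ^ ds.length
  | [], _ => by simp [enc]
  | d :: ds, h => by
    have hd : d < L := h d (by simp)
    have ih := enc_lt L ds (fun d hd => h d (by simp [hd]))
    calc d + L * enc L ds < L + L * enc L ds := by omega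
      _ = L * (enc L ds + 1) := by ring
      _ ≤ L * L ^ ds.length := by
          exact Nat.mul_le_mul_left _ ih
      _ = L ^ (d :: ds).length := by rw [List.length_cons]; ring

theorem tileAt_mem {l : List WangTile} (hl : l ≠ []) (n m i j : ℕ) : tileAt l n m i j ∈ l := by
  have hL : 0 < l.length := List.length_pos_iff.2 hl
  have : dig l.length m (i * n + j) < l.length := Nat.mod_lt _ hL
  rw [tileAt, List.getD_eq_getElem l T0 this]
  exact List.getElem_mem _


def idx (l : List WangTile) (t : WangTile) : ℕ := List.idxOf t l

theorem idx_lt {l : List WangTile} {t : WangTile} (h : t ∈ l) : idx l t < l.length :=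
  List.idxOf_lt_length_iff.2 h

theorem getD_idx {l : List WangTile} {t : WangTile} (h : t ∈ l) : l.getD (idx l t) T0 = t := by
  rw [List.getD_eq_getElem _ _ (idx_lt h)]
  exact List.getElem_idxOf _

theorem exists_code {l : List WangTile} (hl : l ≠ []) {n : ℕ} (hn : 0 < n) (g : ℕ → ℕ → WangTile)
    (hg : ∀ i j, i < n → j < n → g i j ∈ l) :
    ∃ m < l.length ^ (n*n), ∀ i j, i < n → j < n → tileAt l n m i j = g i j := by
  set L := l.length with hLdef
  set ds : List ℕ := (List.range (n*n)).map (fun k => idx l (g (k / n) (k % n))) with hds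
  have hmem : ∀ k < n * n, g (k / n) (k % n) ∈ l := fun k hk =>
    hg _ _ (Nat.div_lt_iff_lt_mul hn |>.2 hk) (Nat.mod_lt _ hn)
  have hdlt : ∀ d ∈ ds, d < L := by
    intro d hd
    rw [hds, List.mem_map] at hd
    obtain ⟨k, hk, rfl⟩ := hd
    rw [List.mem_range] at hk
    exact idx_lt (hmem k hk)
  refine ⟨enc L ds, ?_, ?_⟩
  · have := enc_lt L ds hdlt
    simpa [hds] using this
  · intro i j hi hj
    have hk : i * n + j < n * n := by
      have h1 : i + 1 ≤ n := hi
      have : (i+1) * n ≤ n * n := Nat.mul_le_mul_right _ h1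
      nlinarith
    have hgd : ds.getD (i * n + j) 0 = idx l (g i j) := by
      rw [hds]
      rw [List.getD_eq_getElem _ _ (by simpa using hk)]
      simp only [List.getElem_map, List.getElem_range]
      have e1 : (i*n+j)/n = i := by
        rw [Nat.add_comm, Nat.add_mul_div_right _ _ hn, Nat.div_eq_of_lt hj, Nat.zero_add]
      have e2 : (i*n+j)%n = j := by
        rw [Nat.add_comm, Nat.add_mul_mod_self_right, Nat.mod_eq_of_lt hj]
      rw [e1, e2]
    rw [tileAt, dig_enc L ds hdlt, hgd]
    exact getD_idx (hg i j hi hj)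

-- int helpers
theorem emod_toNat {x : ℤ} {n : ℕ} (hn : 0 < n) : ((x % (n:ℤ)).toNat : ℤ) = x % n :=
  Int.toNat_of_nonneg (Int.emod_nonneg x (by exact_mod_cast hn.ne'))

theorem emod_toNat_lt {x : ℤ} {n : ℕ} (hn : 0 < n) : (x % (n:ℤ)).toNat < n := by
  have h2 : x % n < n := Int.emod_lt_of_pos x (by exact_mod_cast hn)
  omega

theorem toNat_emod_succ (x : ℤ) {n : ℕ} (hn : 0 < n) :
    ((x + 1) % (n:ℤ)).toNat = ((x % (n:ℤ)).toNat + 1) % n := by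
  have h1 : ((x % (n:ℤ)).toNat : ℤ) = x % n := emod_toNat hn
  have h2 : (x + 1) % (n:ℤ) = (((x % (n:ℤ)).toNat + 1 : ℕ) : ℤ) % n := by
    push_cast [h1]
    conv_rhs => rw [Int.add_emod, Int.emod_emod_of_dvd x dvd_rfl, ← Int.add_emod]
  rw [h2, ← Int.natCast_mod, Int.toNat_natCast]

theorem torusOK_spec {l : List WangTile} {n m : ℕ} (h : torusOK l n m = true)
    {i j : ℕ} (hi : i < n) (hj : j < n) :
    (tileAt l n m i j).east = (tileAt l n m ((i+1) % n) j).west ∧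
    (tileAt l n m i j).north = (tileAt l n m i ((j+1) % n)).south := by
  rw [torusOK, List.all_eq_true] at h
  have h1 := h i (List.mem_range.2 hi)
  rw [List.all_eq_true] at h1
  have h2 := h1 j (List.mem_range.2 hj)
  rw [Bool.and_eq_true, beq_iff_eq, beq_iff_eq] at h2
  exact h2

theorem qA_tiling {l : List WangTile} {N : ℕ} (h : qA l N = true) :
    ∃ f, IsWangTilingL l f := by
  rw [qA, List.any_eq_true] at h
  obtain ⟨m, hm, hok⟩ := h
  rw [List.mem_range] at hm
  set n := N + 1 with hn
  have hn0 : 0 < n := Nat.succ_pos _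
  have hl : l ≠ [] := by
    rintro rfl
    simp at hm
  refine ⟨fun p => tileAt l n m (p.1 % (n:ℤ)).toNat (p.2 % (n:ℤ)).toNat, ?_, ?_⟩
  · intro p
    exact tileAt_mem hl _ _ _ _
  · intro x y
    set i := (x % (n:ℤ)).toNat with hi
    set j := (y % (n:ℤ)).toNat with hj
    have hilt : i < n := emod_toNat_lt hn0
    have hjlt : j < n := emod_toNat_lt hn0
    have e1 : ((x + 1) % (n:ℤ)).toNat = (i + 1) % n := toNat_emod_succ x hn0
    have e2 : ((y + 1) % (n:ℤ)).toNat = (j + 1) % n := toNat_emod_succ y hn0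
    have hspec := torusOK_spec hok hilt hjlt
    constructor
    · simpa [e1] using hspec.1
    · simpa [e2] using hspec.2

theorem sqOK_of_tiling {l : List WangTile} {f : ℤ × ℤ → WangTile} (hf : IsWangTilingL l f)
    (n : ℕ) (hn : 0 < n) :
    ∃ m < l.length ^ (n * n), sqOK l n m = true ∧
      ∀ i j : ℕ, i < n → j < n → tileAt l n m i j = f ((i:ℤ), (j:ℤ)) := by
  obtain ⟨hmem, hmatch⟩ := hf
  have hl : l ≠ [] := by
    rintro rfl
    exact absurd (hmem (0,0)) (by simp)
  obtain ⟨m, hmlt, htile⟩ := exists_code hl hn (fun i j => f ((i:ℤ), (j:ℤ)))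
    (fun i j _ _ => hmem _)
  refine ⟨m, hmlt, ?_, htile⟩
  rw [sqOK, Bool.and_eq_true]
  constructor
  · rw [List.all_eq_true]
    intro i hi
    rw [List.mem_range] at hi
    rw [List.all_eq_true]
    intro j hj
    rw [List.mem_range] at hj
    rw [beq_iff_eq, htile i j (by omega) hj, htile (i+1) j (by omega) hj]
    have := (hmatch i j).1
    simpa [Int.natCast_succ] using this
  · rw [List.all_eq_true]
    intro i hi
    rw [List.mem_range] at hi
    rw [List.all_eq_true]
    intro j hj
    rw [List.mem_range] at hj
    rw [beq_iff_eq, htile i j hi (by omega), htile i (j+1) hi (by omega)]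
    have := (hmatch i j).2
    simpa [Int.natCast_succ] using this

theorem qB_false_of_tiling {l : List WangTile} (hf : ∃ f, IsWangTilingL l f) (N : ℕ) :
    qB l N = false := by
  obtain ⟨f, hf⟩ := hf
  obtain ⟨m, hmlt, hsq, -⟩ := sqOK_of_tiling hf (N+1) (Nat.succ_pos _)
  rw [qB]
  rw [List.all_eq_false]
  exact ⟨m, List.mem_range.2 hmlt, by simp [hsq]⟩

theorem sqOK_spec {l : List WangTile} {n m : ℕ} (h : sqOK l n m = true) :
    (∀ i j : ℕ, i + 1 < n → j < n →
      (tileAt l n m i j).east = (tileAt l n m (i+1) j).west) ∧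
    (∀ i j : ℕ, i < n → j + 1 < n →
      (tileAt l n m i j).north = (tileAt l n m i (j+1)).south) := by
  rw [sqOK, Bool.and_eq_true, List.all_eq_true, List.all_eq_true] at h
  constructor
  · intro i j hi hj
    have h1 := h.1 i (List.mem_range.2 (by omega))
    rw [List.all_eq_true] at h1
    exact beq_iff_eq.1 (h1 j (List.mem_range.2 hj))
  · intro i j hi hj
    have h1 := h.2 i (List.mem_range.2 hi)
    rw [List.all_eq_true] at h1
    exact beq_iff_eq.1 (h1 j (List.mem_range.2 (by omega)))

theorem tiling_of_qB_false {l : List WangTile} (h : ∀ N, qB l N = false) :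
    ∃ f, IsWangTilingL l f := by
  have hex : ∀ N : ℕ, ∃ m, m < l.length ^ ((N+1)*(N+1)) ∧ sqOK l (N+1) m = true := by
    intro N
    have := h N
    rw [qB, List.all_eq_false] at this
    obtain ⟨m, hm1, hm⟩ := this
    exact ⟨m, List.mem_range.1 hm1, by simpa using hm⟩
  have hl : l ≠ [] := by
    rintro rfl
    obtain ⟨m, hm, -⟩ := hex 0
    simp at hm
  let S := {t : WangTile // t ∈ l.toFinset}
  letI : TopologicalSpace S := ⊥
  haveI : DiscreteTopology S := ⟨rfl⟩
  haveI : Finite S := inferInstance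
  haveI : CompactSpace S := Finite.compactSpace
  set K : ℕ → Set ((ℤ × ℤ) → S) := fun N =>
    {F | ∀ x y : ℤ, x.natAbs ≤ N → y.natAbs ≤ N →
      ((F (x,y)).1.east = (F (x+1,y)).1.west ∧ (F (x,y)).1.north = (F (x,y+1)).1.south)}
    with hK
  have hclosed : ∀ N, IsClosed (K N) := by
    intro N
    have hec : ∀ (p q : ℤ × ℤ) (u v : WangTile → ℕ),
        IsClosed {F : (ℤ × ℤ) → S | u (F p).1 = v (F q).1} := by
      intro p q u v
      have hc : Continuous fun F : (ℤ × ℤ) → S => (F p, F q) :=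
        (continuous_apply p).prodMk (continuous_apply q)
      exact (isClosed_discrete {y : S × S | u y.1.1 = v y.2.1}).preimage hc
    have : K N = ⋂ (x : ℤ) (y : ℤ) (_ : x.natAbs ≤ N) (_ : y.natAbs ≤ N),
        ({F : (ℤ × ℤ) → S | WangTile.east (F (x,y)).1 = WangTile.west (F (x+1,y)).1} ∩
         {F : (ℤ × ℤ) → S | WangTile.north (F (x,y)).1 = WangTile.south (F (x,y+1)).1}) := by
      ext F
      simp only [hK, Set.mem_setOf_eq, Set.mem_iInter, Set.mem_inter_iff]
    rw [this]
    exact isClosed_iInter fun x => isClosed_iInter fun y => isClosed_iInter fun _ =>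
      isClosed_iInter fun _ => ((hec _ _ _ _).inter (hec _ _ _ _))
  have hcomp : ∀ N, IsCompact (K N) := fun N => (hclosed N).isCompact
  have hne : ∀ N, (K N).Nonempty := by
    intro N
    obtain ⟨m, -, hm⟩ := hex (2*N+2)
    have hsq := sqOK_spec hm
    refine ⟨fun p => ⟨tileAt l (2*N+3) m (p.1 + (N:ℤ) + 1).toNat (p.2 + (N:ℤ) + 1).toNat,
      List.mem_toFinset.2 (tileAt_mem hl _ _ _ _)⟩, ?_⟩
    intro x y hx hy
    have e1 : (x + 1 + (N:ℤ) + 1).toNat = (x + (N:ℤ) + 1).toNat + 1 := by omega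
    have e2 : (y + 1 + (N:ℤ) + 1).toNat = (y + (N:ℤ) + 1).toNat + 1 := by omega
    constructor
    · have hh := hsq.1 ((x + (N:ℤ) + 1).toNat) ((y + (N:ℤ) + 1).toNat) (by omega) (by omega)
      dsimp only
      rw [e1]
      exact hh
    · have hh := hsq.2 ((x + (N:ℤ) + 1).toNat) ((y + (N:ℤ) + 1).toNat) (by omega) (by omega)
      dsimp only
      rw [e2]
      exact hh
  have hdir : Directed (· ⊇ ·) K := by
    intro N M
    refine ⟨max N M, ?_, ?_⟩
    · intro F hF x y hx hy
      exact hF x y (le_trans hx (le_max_left _ _)) (le_trans hy (le_max_left _ _))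
    · intro F hF x y hx hy
      exact hF x y (le_trans hx (le_max_right _ _)) (le_trans hy (le_max_right _ _))
  obtain ⟨F, hF⟩ := IsCompact.nonempty_iInter_of_directed_nonempty_isCompact_isClosed
    K hdir hne hcomp hclosed
  rw [Set.mem_iInter] at hF
  refine ⟨fun p => (F p).1, fun p => List.mem_toFinset.1 (F p).2, ?_⟩
  intro x y
  exact hF (max x.natAbs y.natAbs) x y (le_max_left _ _) (le_max_right _ _)

theorem emod_add_one' (t c : ℤ) : (t + 1) % c = (t % c + 1) % c := by
  conv_rhs => rw [Int.add_emod, Int.emod_emod_of_dvd t dvd_rfl, ← Int.add_emod]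

theorem emod_sub' (t a c : ℤ) : (t - a) % c = (t % c - a) % c := by
  conv_rhs => rw [Int.sub_emod, Int.emod_emod_of_dvd t dvd_rfl, ← Int.sub_emod]

theorem ediv_succ_lt {B : ℤ} (hB : 0 < B) {y : ℤ} (h : y % B + 1 < B) :
    (y+1)/B = y/B ∧ (y+1) % B = y % B + 1 := by
  have hy := Int.emod_nonneg y hB.ne'
  have key : y + 1 = (y % B + 1) + B * (y / B) := by
    have := Int.mul_ediv_add_emod y B
    omega
  constructor
  · rw [key, Int.add_mul_ediv_left _ _ hB.ne', Int.ediv_eq_zero_of_lt (by omega) h, zero_add]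
  · rw [key, Int.add_mul_emod_self_left, Int.emod_eq_of_lt (by omega) h]

theorem ediv_succ_eq {B : ℤ} (hB : 0 < B) {y : ℤ} (h : y % B + 1 = B) :
    (y+1)/B = y/B + 1 ∧ (y+1) % B = 0 := by
  have h1 := Int.mul_ediv_add_emod y B
  have key : y + 1 = B * (y / B + 1) := by
    have h2 : B * (y/B+1) = B * (y/B) + B := by ring
    omega
  constructor
  · rw [key, Int.mul_ediv_cancel_left _ hB.ne']
  · rw [key, Int.mul_emod_right]

theorem doubly_periodic {l : List WangTile} {f : ℤ × ℤ → WangTile} (hf : IsWangTilingL l f)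
    {a : ℤ} {B : ℕ} (hB : 0 < B) (hper : ∀ p : ℤ × ℤ, f (p + (a, (B:ℤ))) = f p) :
    ∃ (g : ℤ × ℤ → WangTile) (n : ℕ), IsWangTilingL l g ∧ 0 < n ∧
      (∀ p : ℤ × ℤ, g (p.1 + (n:ℤ), p.2) = g p) ∧
      (∀ p : ℤ × ℤ, g (p.1, p.2 + (n:ℤ)) = g p) := by
  obtain ⟨hmem, hmatch⟩ := hf
  set w : ℕ := a.natAbs + 1 with hw
  have haw : a < (w:ℤ) ∧ -(w:ℤ) < a := by omega
  let S := {t : WangTile // t ∈ l.toFinset}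
  haveI : Finite S := inferInstance
  let E : ℕ → (Fin (2*w) × Fin B) → S := fun k q =>
    ⟨f ((k:ℤ)*(w:ℤ) - (w:ℤ) + (q.1:ℤ), (q.2:ℤ)), List.mem_toFinset.2 (hmem _)⟩
  obtain ⟨u0, v0, huv, hEuv⟩ := Finite.exists_ne_map_eq_of_infinite E
  obtain ⟨k1, k2, hk, hE⟩ : ∃ k1 k2, k1 < k2 ∧ E k1 = E k2 := by
    rcases huv.lt_or_gt with h | h
    · exact ⟨u0, v0, h, hEuv⟩
    · exact ⟨v0, u0, h, hEuv.symm⟩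
  set pp : ℕ := (k2 - k1) * w with hpp
  have hppos : 0 < pp := Nat.mul_pos (by omega) (by omega)
  have hppz : ((pp:ℤ)) ≠ 0 := by exact_mod_cast hppos.ne'
  have hppz' : (0:ℤ) < (pp:ℤ) := by exact_mod_cast hppos
  set bse : ℤ := (k1:ℤ) * (w:ℤ) with hbse
  have hppc : (pp:ℤ) = (k2:ℤ)*(w:ℤ) - (k1:ℤ)*(w:ℤ) := by
    rw [hpp]
    push_cast [Nat.cast_sub hk.le]
    ring
  have hwpp : w ≤ pp := by
    calc w = 1 * w := (one_mul w).symm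
    _ ≤ (k2 - k1) * w := Nat.mul_le_mul_right w (by omega)
  have hEq : ∀ c : ℤ, bse - w ≤ c → c < bse + w → ∀ j : ℕ, j < B →
      f (c + (pp:ℤ), (j:ℤ)) = f (c, (j:ℤ)) := by
    intro c hc1 hc2 j hj
    have hi : (c - (bse - w)).toNat < 2*w := by omega
    have h1 := congrFun hE (⟨(c - (bse - w)).toNat, hi⟩, ⟨j, hj⟩)
    have h2 := congrArg Subtype.val h1
    simp only [E] at h2
    have hd : (((c - (bse - w)).toNat : ℕ) : ℤ) = c - (bse - w) := by omega
    have e1 : (k1:ℤ)*(w:ℤ) - (w:ℤ) + (((c - (bse - w)).toNat : ℕ) : ℤ) = c := by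
      rw [hd]; omega
    have e2 : (k2:ℤ)*(w:ℤ) - (w:ℤ) + (((c - (bse - w)).toNat : ℕ) : ℤ) = c + (pp:ℤ) := by
      rw [hd]; omega
    rw [e1, e2] at h2
    exact h2.symm
  set r : ℤ → ℤ := fun x => bse + (x - bse) % (pp:ℤ) with hr
  have hrb : ∀ x, bse ≤ r x ∧ r x < bse + pp := by
    intro x
    have h0 := Int.emod_nonneg (x - bse) hppz
    have h1 := Int.emod_lt_of_pos (x - bse) hppz'
    simp only [hr]
    omega
  have hr_genper : ∀ (x t : ℤ), r (x + t * (pp:ℤ)) = r x := by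
    intro x t
    simp only [hr]
    congr 1
    rw [show x + t * (pp:ℤ) - bse = (x - bse) + t * (pp:ℤ) by ring, Int.add_mul_emod_self_right]
  set s : ℤ → ℕ → WangTile := fun x j => f (r x, (j:ℤ)) with hs
  have hmem_s : ∀ x j, s x j ∈ l := fun x j => hmem _
  have hs_genper : ∀ (x t : ℤ) (j : ℕ), s (x + t * (pp:ℤ)) j = s x j := by
    intro x t j
    simp only [hs, hr_genper]
  -- horizontal matching in the strip
  have hH : ∀ (x : ℤ) (j : ℕ), j < B → (s x j).east = (s (x+1) j).west := by
    intro x j hj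
    have h0 := Int.emod_nonneg (x - bse) hppz
    have h1 := Int.emod_lt_of_pos (x - bse) hppz'
    have hsucc : (x + 1 - bse) % (pp:ℤ) = ((x - bse) % pp + 1) % pp := by
      rw [show x + 1 - bse = (x - bse) + 1 by ring, emod_add_one']
    by_cases hc : (x - bse) % (pp:ℤ) + 1 < (pp:ℤ)
    · have hstep : r (x+1) = r x + 1 := by
        simp only [hr, hsucc]
        rw [Int.emod_eq_of_lt (by omega) hc]
        ring
      simp only [hs]
      rw [hstep]
      exact (hmatch (r x) j).1
    · have hup : (x - bse) % (pp:ℤ) + 1 = (pp:ℤ) := by omega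
      have hr1 : r (x + 1) = bse := by
        simp only [hr, hsucc, hup, Int.emod_self, add_zero]
      have hrx : r x = bse + pp - 1 := by simp only [hr]; omega
      have hwrap : f (bse + (pp:ℤ), (j:ℤ)) = f (bse, (j:ℤ)) := hEq bse (by omega) (by omega) j hj
      have hm1 := (hmatch (bse + (pp:ℤ) - 1) (j:ℤ)).1
      rw [show bse + (pp:ℤ) - 1 + 1 = bse + (pp:ℤ) by ring, hwrap] at hm1
      simp only [hs]
      rw [hr1, hrx]
      exact hm1
  -- vertical seam matching in the strip
  have hV : ∀ x : ℤ, (s x (B-1)).north = (s (x - a) 0).south := by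
    intro x
    have hBcast : (((B-1:ℕ)):ℤ) + 1 = (B:ℤ) := by omega
    have h2 : (f (r x, ((B-1:ℕ):ℤ))).north = (f (r x, (B:ℤ))).south := by
      have := (hmatch (r x) ((B-1:ℕ):ℤ)).2
      rwa [hBcast] at this
    have h3 : f (r x, (B:ℤ)) = f (r x - a, 0) := by
      have h := hper (r x - a, 0)
      have e : ((r x - a, (0:ℤ)) + (a, (B:ℤ))) = (r x, (B:ℤ)) := by
        simp only [Prod.mk_add_mk, Prod.mk.injEq]
        constructor <;> ring
      rw [e] at h
      exact h
    have h4 : f (r x - a, (0:ℤ)) = f (r (x - a), (0:ℤ)) := by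
      have h0 := Int.emod_nonneg (x - bse) hppz
      have h1 := Int.emod_lt_of_pos (x - bse) hppz'
      set u : ℤ := (x - bse) % (pp:ℤ) with hu
      have hrx2 : r x = bse + u := by simp only [hr, hu]
      have hrs : r (x - a) = bse + (u - a) % (pp:ℤ) := by
        simp only [hr, hu]
        rw [show x - a - bse = (x - bse) - a by ring, emod_sub']
      rw [hrx2, hrs]
      rcases lt_or_ge (u - a) 0 with hd0 | hd0
      · have hdm : (u - a) % (pp:ℤ) = u - a + pp := by
          have h5 : (u - a + (pp:ℤ)) % (pp:ℤ) = (u - a) % pp := by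
            rw [show u - a + (pp:ℤ) = (u - a) + 1*(pp:ℤ) by ring, Int.add_mul_emod_self_right]
          rw [← h5, Int.emod_eq_of_lt (by omega) (by omega)]
        rw [hdm]
        have hc := hEq (bse + (u - a)) (by omega) (by omega) 0 hB
        simp only [Nat.cast_zero] at hc
        rw [show bse + (u - a) + (pp:ℤ) = bse + (u - a + pp) by ring] at hc
        rw [show bse + u - a = bse + (u - a) by ring]
        exact hc.symm
      · rcases lt_or_ge (u - a) (pp:ℤ) with hd1 | hd1
        · rw [Int.emod_eq_of_lt hd0 hd1, show bse + u - a = bse + (u - a) by ring]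
        · have hdm : (u - a) % (pp:ℤ) = u - a - pp := by
            have h5 : (u - a - (pp:ℤ)) % (pp:ℤ) = (u - a) % pp := by
              rw [show u - a - (pp:ℤ) = (u - a) + (-1)*(pp:ℤ) by ring, Int.add_mul_emod_self_right]
            rw [← h5, Int.emod_eq_of_lt (by omega) (by omega)]
          rw [hdm]
          have hc := hEq (bse + (u - a - pp)) (by omega) (by omega) 0 hB
          simp only [Nat.cast_zero] at hc
          rw [show bse + (u - a - pp) + (pp:ℤ) = bse + u - a by ring] at hc
          exact hc
    simp only [hs, Nat.cast_zero]
    rw [h2, h3, h4]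
  -- the doubly periodic tiling
  have hBz : ((B:ℤ)) ≠ 0 := by exact_mod_cast hB.ne'
  have hBz' : (0:ℤ) < (B:ℤ) := by exact_mod_cast hB
  set g : ℤ × ℤ → WangTile :=
    fun p => s (p.1 - a * (p.2 / (B:ℤ))) ((p.2 % (B:ℤ)).toNat) with hg
  have hjlt : ∀ y : ℤ, (y % (B:ℤ)).toNat < B := by
    intro y
    have h0 := Int.emod_nonneg y hBz
    have h1 := Int.emod_lt_of_pos y hBz'
    omega
  refine ⟨g, pp * B, ⟨fun p => hmem_s _ _, ?_⟩, Nat.mul_pos hppos hB, ?_, ?_⟩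
  · -- matching
    intro x y
    constructor
    · simp only [hg]
      rw [show x + 1 - a * (y / (B:ℤ)) = (x - a * (y / (B:ℤ))) + 1 by ring]
      exact hH _ _ (hjlt y)
    · simp only [hg]
      have h0 := Int.emod_nonneg y hBz
      have h1 := Int.emod_lt_of_pos y hBz'
      by_cases hc : y % (B:ℤ) + 1 < (B:ℤ)
      · obtain ⟨hdiv, hmod⟩ := ediv_succ_lt hBz' hc
        rw [hdiv, hmod]
        have htn : ((y % (B:ℤ) + 1).toNat) = (y % (B:ℤ)).toNat + 1 := by omega
        rw [htn]
        simp only [hs]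
        have := (hmatch (r (x - a * (y / (B:ℤ)))) ((y % (B:ℤ)).toNat : ℤ)).2
        rwa [show (((y % (B:ℤ)).toNat : ℕ) : ℤ) + 1 = (((y % (B:ℤ)).toNat + 1 : ℕ) : ℤ) by
          push_cast; ring] at this
      · have hceq : y % (B:ℤ) + 1 = (B:ℤ) := by omega
        obtain ⟨hdiv, hmod⟩ := ediv_succ_eq hBz' hceq
        rw [hdiv, hmod]
        have htn : (y % (B:ℤ)).toNat = B - 1 := by omega
        rw [htn]
        have := hV (x - a * (y / (B:ℤ)))
        rw [show x - a * (y / (B:ℤ) + 1) = (x - a * (y / (B:ℤ))) - a by ring]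
        simpa using this
  · -- horizontal period
    intro p
    simp only [hg]
    rw [show p.1 + ((pp * B : ℕ):ℤ) - a * (p.2 / (B:ℤ))
        = (p.1 - a * (p.2 / (B:ℤ))) + (B:ℤ) * (pp:ℤ) by push_cast; ring]
    exact hs_genper _ _ _
  · -- vertical period
    intro p
    simp only [hg]
    have e1 : p.2 + ((pp * B : ℕ):ℤ) = p.2 + (pp:ℤ) * (B:ℤ) := by push_cast; ring
    rw [e1, Int.add_mul_ediv_right _ _ hBz, Int.add_mul_emod_self_right]
    rw [show p.1 - a * (p.2 / (B:ℤ) + (pp:ℤ)) = (p.1 - a * (p.2 / (B:ℤ))) + (-a) * (pp:ℤ) by ring]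
    rw [hs_genper]

def tr (t : WangTile) : WangTile := (t.2.1, t.1, t.2.2.2, t.2.2.1)

theorem tr_tr (t : WangTile) : tr (tr t) = t := rfl

theorem transpose_tiling {l : List WangTile} {f : ℤ × ℤ → WangTile} (hf : IsWangTilingL l f) :
    IsWangTilingL (l.map tr) (fun p => tr (f (p.2, p.1))) := by
  obtain ⟨hmem, hmatch⟩ := hf
  refine ⟨fun p => List.mem_map_of_mem (f := tr) (hmem _), ?_⟩
  intro x y
  constructor
  · exact (hmatch y x).2
  · exact (hmatch y x).1

theorem exists_doubly_periodic {l : List WangTile} {f : ℤ × ℤ → WangTile}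
    (hf : IsWangTilingL l f) (hper : WangPeriodic f) :
    ∃ (g : ℤ × ℤ → WangTile) (n : ℕ), IsWangTilingL l g ∧ 0 < n ∧
      (∀ p : ℤ × ℤ, g (p.1 + (n:ℤ), p.2) = g p) ∧
      (∀ p : ℤ × ℤ, g (p.1, p.2 + (n:ℤ)) = g p) := by
  obtain ⟨⟨va, vb⟩, hv0, hv⟩ := hper
  have hv' : ∀ p : ℤ × ℤ, f (p + (-va, -vb)) = f p := by
    intro p
    have := hv (p + (-va, -vb))
    rw [show p + (-va, -vb) + (va, vb) = p by
      simp only [Prod.mk_add_mk, Prod.ext_iff]; constructor <;> [skip; skip] <;> simp <;> ring]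
      at this
    exact this.symm
  rcases lt_trichotomy vb 0 with hb | hb | hb
  · have : 0 < (-vb).toNat := by omega
    refine doubly_periodic (a := -va) ⟨hf.1, hf.2⟩ this ?_
    have e : (((-vb).toNat : ℕ) : ℤ) = -vb := by omega
    rw [e]
    exact hv'
  · -- vb = 0, va ≠ 0 : transpose
    have hva : va ≠ 0 := by
      rintro rfl
      exact hv0 (by rw [hb]; rfl)
    have htr : IsWangTilingL (l.map tr) (fun p => tr (f (p.2, p.1))) := transpose_tiling hf
    have hperT : ∀ c : ℤ, (c = va ∨ c = -va) →
        ∀ p : ℤ × ℤ, (fun p : ℤ × ℤ => tr (f (p.2, p.1))) (p + ((0:ℤ), c))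
          = (fun p : ℤ × ℤ => tr (f (p.2, p.1))) p := by
      intro c hc p
      simp only []
      congr 1
      rcases hc with rfl | rfl
      · have := hv (p.2, p.1)
        rw [hb] at this
        simpa using this
      · have := hv' (p.2, p.1)
        rw [hb, neg_zero] at this
        simpa using this
    have hcase : ∃ c : ℤ, 0 < c ∧ (c = va ∨ c = -va) := by
      rcases lt_trichotomy va 0 with h | h | h
      · exact ⟨-va, by omega, Or.inr rfl⟩
      · exact absurd h hva
      · exact ⟨va, h, Or.inl rfl⟩
    obtain ⟨c, hcpos, hcor⟩ := hcase
    have : 0 < c.toNat := by omega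
    obtain ⟨g', n, hg', hn, hh', hvv'⟩ := doubly_periodic (a := 0) htr this (by
      intro p
      have e : ((c.toNat : ℕ) : ℤ) = c := by omega
      rw [e]
      exact hperT c hcor p)
    refine ⟨fun p => tr (g' (p.2, p.1)), n, ?_, hn, ?_, ?_⟩
    · have h2 := transpose_tiling hg'
      have e : (l.map tr).map tr = l := by
        rw [List.map_map]
        have : tr ∘ tr = id := funext tr_tr
        rw [this, List.map_id]
      rwa [e] at h2
    · intro p
      simp only []
      congr 1
      exact hvv' (p.2, p.1)
    · intro p
      simp only []
      congr 1
      exact hh' (p.2, p.1)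
  · have : 0 < vb.toNat := by omega
    refine doubly_periodic (a := va) ⟨hf.1, hf.2⟩ this ?_
    have e : ((vb.toNat : ℕ) : ℤ) = vb := by omega
    rw [e]
    exact hv

theorem qA_of_doubly {l : List WangTile} {g : ℤ × ℤ → WangTile} {n : ℕ}
    (hg : IsWangTilingL l g) (hn : 0 < n)
    (hh : ∀ p : ℤ × ℤ, g (p.1 + (n:ℤ), p.2) = g p)
    (hv : ∀ p : ℤ × ℤ, g (p.1, p.2 + (n:ℤ)) = g p) :
    ∃ N, qA l N = true := by
  have hl : l ≠ [] := by
    rintro rfl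
    exact absurd (hg.1 (0,0)) (by simp)
  obtain ⟨m, hmlt, htile⟩ := exists_code hl hn (fun i j => g ((i:ℤ), (j:ℤ)))
    (fun i j _ _ => hg.1 _)
  refine ⟨n - 1, ?_⟩
  rw [qA, List.any_eq_true]
  have hn1 : n - 1 + 1 = n := by omega
  rw [hn1]
  refine ⟨m, List.mem_range.2 hmlt, ?_⟩
  rw [torusOK, List.all_eq_true]
  intro i hi
  rw [List.mem_range] at hi
  rw [List.all_eq_true]
  intro j hj
  rw [List.mem_range] at hj
  rw [Bool.and_eq_true, beq_iff_eq, beq_iff_eq]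
  have h1 : tileAt l n m i j = g ((i:ℤ), (j:ℤ)) := htile i j hi hj
  have h2 : tileAt l n m ((i+1) % n) j = g ((i:ℤ)+1, (j:ℤ)) := by
    rcases Nat.lt_or_ge (i+1) n with h | h
    · rw [Nat.mod_eq_of_lt h, htile _ _ h hj]
      norm_num
    · have hieq : i + 1 = n := by omega
      have hz : (i+1) % n = 0 := by rw [hieq, Nat.mod_self]
      rw [hz, htile 0 j hn hj]
      have hper := hh ((0:ℤ), (j:ℤ))
      simp only [] at hper
      rw [show ((i:ℤ)+1) = (0:ℤ) + (n:ℤ) by omega]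
      rw [hper]
      norm_num
  have h3 : tileAt l n m i ((j+1) % n) = g ((i:ℤ), (j:ℤ)+1) := by
    rcases Nat.lt_or_ge (j+1) n with h | h
    · rw [Nat.mod_eq_of_lt h, htile _ _ hi h]
      norm_num
    · have hjeq : j + 1 = n := by omega
      have hz : (j+1) % n = 0 := by rw [hjeq, Nat.mod_self]
      rw [hz, htile i 0 hi hn]
      have hper := hv ((i:ℤ), (0:ℤ))
      simp only [] at hper
      rw [show ((j:ℤ)+1) = (0:ℤ) + (n:ℤ) by omega]
      rw [hper]
      norm_num
  rw [h1, h2, h3]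
  exact ⟨(hg.2 i j).1, (hg.2 i j).2⟩

section PrimrecPart

open Primrec

theorem primrec_tileAt {δ : Type} [Primcodable δ] {L : δ → List WangTile} {n m i j : δ → ℕ}
    (hL : Primrec L) (hn : Primrec n) (hm : Primrec m) (hi : Primrec i) (hj : Primrec j) :
    Primrec fun z => tileAt (L z) (n z) (m z) (i z) (j z) :=
  (Primrec.list_getD T0).comp hL
    (Primrec.nat_mod.comp
      (Primrec.nat_div.comp hm (hpow.comp (Primrec.list_length.comp hL)
        (Primrec.nat_add.comp (Primrec.nat_mul.comp hi hn) hj)))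
      (Primrec.list_length.comp hL))

private abbrev Base : Type := List WangTile × ℕ × ℕ

theorem primrec_torusOK : Primrec fun z : Base => torusOK z.1 z.2.1 z.2.2 := by
  have pl : Primrec fun z : (Base × ℕ) × ℕ => z.1.1.1 := fst.comp (fst.comp fst)
  have pn : Primrec fun z : (Base × ℕ) × ℕ => z.1.1.2.1 := fst.comp (snd.comp (fst.comp fst))
  have pm : Primrec fun z : (Base × ℕ) × ℕ => z.1.1.2.2 := snd.comp (snd.comp (fst.comp fst))
  have pi : Primrec fun z : (Base × ℕ) × ℕ => z.1.2 := snd.comp fst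
  have pj : Primrec fun z : (Base × ℕ) × ℕ => z.2 := snd
  have ht1 := primrec_tileAt pl pn pm pi pj
  have ht2 := primrec_tileAt pl pn pm
    (Primrec.nat_mod.comp (succ.comp pi) pn) pj
  have ht3 := primrec_tileAt pl pn pm pi
    (Primrec.nat_mod.comp (succ.comp pj) pn)
  have heast : Primrec fun z : (Base × ℕ) × ℕ =>
      (tileAt z.1.1.1 z.1.1.2.1 z.1.1.2.2 z.1.2 z.2).east := fst.comp (snd.comp (snd.comp ht1))
  have hwest : Primrec fun z : (Base × ℕ) × ℕ =>
      (tileAt z.1.1.1 z.1.1.2.1 z.1.1.2.2 ((z.1.2+1) % z.1.1.2.1) z.2).west := fst.comp ht2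
  have hnorth : Primrec fun z : (Base × ℕ) × ℕ =>
      (tileAt z.1.1.1 z.1.1.2.1 z.1.1.2.2 z.1.2 z.2).north :=
    snd.comp (snd.comp (snd.comp ht1))
  have hsouth : Primrec fun z : (Base × ℕ) × ℕ =>
      (tileAt z.1.1.1 z.1.1.2.1 z.1.1.2.2 z.1.2 ((z.2+1) % z.1.1.2.1)).south :=
    fst.comp (snd.comp ht3)
  have hinner : Primrec fun z : (Base × ℕ) × ℕ =>
      (((tileAt z.1.1.1 z.1.1.2.1 z.1.1.2.2 z.1.2 z.2).east ==
        (tileAt z.1.1.1 z.1.1.2.1 z.1.1.2.2 ((z.1.2+1) % z.1.1.2.1) z.2).west) &&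
       ((tileAt z.1.1.1 z.1.1.2.1 z.1.1.2.2 z.1.2 z.2).north ==
        (tileAt z.1.1.1 z.1.1.2.1 z.1.1.2.2 z.1.2 ((z.2+1) % z.1.1.2.1)).south)) :=
    (Primrec.dom_bool₂ (· && ·)).comp
      (Primrec.beq.comp heast hwest) (Primrec.beq.comp hnorth hsouth)
  have hmid : Primrec fun z : Base × ℕ =>
      (List.range z.1.2.1).all fun j =>
        (((tileAt z.1.1 z.1.2.1 z.1.2.2 z.2 j).east ==
          (tileAt z.1.1 z.1.2.1 z.1.2.2 ((z.2+1) % z.1.2.1) j).west) &&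
         ((tileAt z.1.1 z.1.2.1 z.1.2.2 z.2 j).north ==
          (tileAt z.1.1 z.1.2.1 z.1.2.2 z.2 ((j+1) % z.1.2.1)).south)) :=
    primrec_list_all (Primrec.list_range.comp (fst.comp (snd.comp fst))) hinner.to₂
  have houter := primrec_list_all (α := Base)
    (Primrec.list_range.comp (fst.comp snd)) hmid.to₂
  exact houter.of_eq fun z => rfl

theorem primrec_sqOK : Primrec fun z : Base => sqOK z.1 z.2.1 z.2.2 := by
  have pl : Primrec fun z : (Base × ℕ) × ℕ => z.1.1.1 := fst.comp (fst.comp fst)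
  have pn : Primrec fun z : (Base × ℕ) × ℕ => z.1.1.2.1 := fst.comp (snd.comp (fst.comp fst))
  have pm : Primrec fun z : (Base × ℕ) × ℕ => z.1.1.2.2 := snd.comp (snd.comp (fst.comp fst))
  have pi : Primrec fun z : (Base × ℕ) × ℕ => z.1.2 := snd.comp fst
  have pj : Primrec fun z : (Base × ℕ) × ℕ => z.2 := snd
  have ht1 := primrec_tileAt pl pn pm pi pj
  have ht2 := primrec_tileAt pl pn pm (succ.comp pi) pj
  have ht3 := primrec_tileAt pl pn pm pi (succ.comp pj)
  have hinnerH : Primrec fun z : (Base × ℕ) × ℕ =>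
      ((tileAt z.1.1.1 z.1.1.2.1 z.1.1.2.2 z.1.2 z.2).east ==
       (tileAt z.1.1.1 z.1.1.2.1 z.1.1.2.2 (z.1.2+1) z.2).west) :=
    Primrec.beq.comp (fst.comp (snd.comp (snd.comp ht1))) (fst.comp ht2)
  have hinnerV : Primrec fun z : (Base × ℕ) × ℕ =>
      ((tileAt z.1.1.1 z.1.1.2.1 z.1.1.2.2 z.1.2 z.2).north ==
       (tileAt z.1.1.1 z.1.1.2.1 z.1.1.2.2 z.1.2 (z.2+1)).south) :=
    Primrec.beq.comp (snd.comp (snd.comp (snd.comp ht1))) (fst.comp (snd.comp ht3))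
  have hmidH : Primrec fun z : Base × ℕ =>
      (List.range z.1.2.1).all fun j =>
        ((tileAt z.1.1 z.1.2.1 z.1.2.2 z.2 j).east ==
         (tileAt z.1.1 z.1.2.1 z.1.2.2 (z.2+1) j).west) :=
    primrec_list_all (Primrec.list_range.comp (fst.comp (snd.comp fst))) hinnerH.to₂
  have hmidV : Primrec fun z : Base × ℕ =>
      (List.range (z.1.2.1 - 1)).all fun j =>
        ((tileAt z.1.1 z.1.2.1 z.1.2.2 z.2 j).north ==
         (tileAt z.1.1 z.1.2.1 z.1.2.2 z.2 (j+1)).south) :=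
    primrec_list_all (Primrec.list_range.comp (pred.comp (fst.comp (snd.comp fst)))) hinnerV.to₂
  have houterH := primrec_list_all (α := Base)
    (Primrec.list_range.comp (pred.comp (fst.comp snd))) hmidH.to₂
  have houterV := primrec_list_all (α := Base)
    (Primrec.list_range.comp (fst.comp snd)) hmidV.to₂
  have := (Primrec.dom_bool₂ (· && ·)).comp houterH houterV
  exact this.of_eq fun z => rfl

theorem primrec_qA : Primrec₂ qA := by
  have hrange : Primrec fun z : List WangTile × ℕ =>
      List.range (z.1.length ^ ((z.2+1) * (z.2+1))) :=
    Primrec.list_range.comp (hpow.comp (Primrec.list_length.comp fst)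
      (Primrec.nat_mul.comp (succ.comp snd) (succ.comp snd)))
  have hp : Primrec fun z : (List WangTile × ℕ) × ℕ => torusOK z.1.1 (z.1.2+1) z.2 :=
    primrec_torusOK.comp ((fst.comp fst).pair ((succ.comp (snd.comp fst)).pair snd))
  have := primrec_list_any hrange hp.to₂
  exact Primrec.to₂ (this.of_eq fun z => rfl)

theorem primrec_qB : Primrec₂ qB := by
  have hrange : Primrec fun z : List WangTile × ℕ =>
      List.range (z.1.length ^ ((z.2+1) * (z.2+1))) :=
    Primrec.list_range.comp (hpow.comp (Primrec.list_length.comp fst)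
      (Primrec.nat_mul.comp (succ.comp snd) (succ.comp snd)))
  have hp : Primrec fun z : (List WangTile × ℕ) × ℕ => !sqOK z.1.1 (z.1.2+1) z.2 :=
    Primrec.not.comp
      (primrec_sqOK.comp ((fst.comp fst).pair ((succ.comp (snd.comp fst)).pair snd)))
  have := primrec_list_all hrange hp.to₂
  exact Primrec.to₂ (this.of_eq fun z => rfl)

end PrimrecPart

end WangAux

open WangAux in
/-- **Wang's theorem.** If every Wang tile set admitting a tiling of the plane also admits a
periodic tiling (Wang's Fundamental Conjecture), then the predicate "admits a tiling of the
plane" on (list-encoded) Wang tile sets is computable. -/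
theorem wang_fundamental_conjecture_implies_decidable
    (hFC : ∀ l : List WangTile, (∃ f, IsWangTilingL l f) →
      ∃ f, IsWangTilingL l f ∧ WangPeriodic f) :
    ComputablePred (fun l : List WangTile => ∃ f, IsWangTilingL l f) := by
  have hA : ∀ l : List WangTile, (∃ N, qA l N = true) ↔ (∃ f, IsWangTilingL l f) := by
    intro l
    constructor
    · rintro ⟨N, hN⟩
      exact qA_tiling hN
    · intro h
      obtain ⟨f, hf, hper⟩ := hFC l h
      obtain ⟨g, n, hg, hn, hh, hv⟩ := exists_doubly_periodic hf hper
      exact qA_of_doubly hg hn hh hv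
  have hB : ∀ l : List WangTile, (∃ N, qB l N = true) ↔ ¬ (∃ f, IsWangTilingL l f) := by
    intro l
    constructor
    · rintro ⟨N, hN⟩ hf
      have := qB_false_of_tiling hf N
      rw [hN] at this
      simp at this
    · intro h
      by_contra hq
      push_neg at hq
      refine h (tiling_of_qB_false fun N => ?_)
      exact Bool.eq_false_iff.mpr (hq N)
  rw [ComputablePred.computable_iff_re_compl_re']
  constructor
  · exact (re_exists primrec_qA.to_comp).of_eq hA
  · exact (re_exists primrec_qB.to_comp).of_eq hB
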